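/- Let U be the uniform distribution on the type class T_n(P) of an n-type P over a finite alphabet, let P_{Y|X} be a channel (row-stochastic matrix), and let Q_Y be any distribution on the output alphabet. Then D(P_{Y|X}^n ∘ U ‖ Q_Y^n) = n·D(P_Y ‖ Q_Y) + E[log(ℙ[A=1|Y^n]/ℙ[A=1]) | A=1], where (X,Y)^n is drawn i.i.d. from P × P_{Y|X}, A is the indicator that X^n ∈ T_n(P), and P_Y is the marginal of Y under P × P_{Y|X}. -/

import Mathlib

open Finset

/-- Divergence decomposition for a channel applied to a uniform draw from a type class:
D(P_{Y|X}^n ∘ U ‖ Q_Y^n) = n·D(P_Y‖Q_Y) + E[log(ℙ[A=1|Y^n]/ℙ[A=1]) | A=1]. -/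
theorem divergence_fixed_type_identity
    (n q k : ℕ) (hn : 0 < n)
    (m : Fin q → ℕ) (hm : ∑ i, m i = n)
    (W : Fin q → Fin k → ℝ) (hW0 : ∀ i j, 0 ≤ W i j) (hW1 : ∀ i, ∑ j, W i j = 1)
    (Q : Fin k → ℝ) (hQ0 : ∀ j, 0 < Q j) (hQ1 : ∑ j, Q j = 1) :
    -- the n-type P and its type class T_n(P)
    let P : Fin q → ℝ := fun i => (m i : ℝ) / n
    let T : Finset (Fin n → Fin q) :=
      Finset.univ.filter fun x => ∀ i, (Finset.univ.filter fun t => x t = i).card = m i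
    -- distribution of Y^n when X^n is uniform on T and passed through the channel
    let Pout : (Fin n → Fin k) → ℝ :=
      fun y => ((T.card : ℝ))⁻¹ * ∑ x ∈ T, ∏ t, W (x t) (y t)
    -- marginal of Y under P × P_{Y|X}
    let PY : Fin k → ℝ := fun j => ∑ i, P i * W i j
    -- ℙ[A = 1] when X^n ~ P^n, A = 1{X^n ∈ T}
    let PA : ℝ := ∑ x ∈ T, ∏ t, P (x t)
    -- ℙ[A = 1 | Y^n = y] when (X,Y)^n iid from P × P_{Y|X}
    let PAgiven : (Fin n → Fin k) → ℝ := fun y =>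
      (∑ x ∈ T, ∏ t, P (x t) * W (x t) (y t)) /
        (∑ x : Fin n → Fin q, ∏ t, P (x t) * W (x t) (y t))
    (∑ y : Fin n → Fin k, Pout y * Real.log (Pout y / ∏ t, Q (y t)))
      = n * (∑ j, PY j * Real.log (PY j / Q j))
        + ∑ y : Fin n → Fin k, Pout y * Real.log (PAgiven y / PA) := by
  intro P T Pout PY PA PAgiven
  have hTmem : ∀ x : Fin n → Fin q,
      x ∈ T ↔ ∀ i, (Finset.univ.filter fun t => x t = i).card = m i := by
    intro x
    exact Finset.mem_filter.trans (and_iff_right (Finset.mem_univ x))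
  have hnR : (0:ℝ) < n := by exact_mod_cast hn
  have hnR' : (n:ℝ) ≠ 0 := hnR.ne'
  have hP0 : ∀ i, 0 ≤ P i := fun i => div_nonneg (Nat.cast_nonneg _) hnR.le
  -- fiberwise lemmas for members of the type class
  have hx_sum : ∀ x ∈ T, ∀ f : Fin q → ℝ, ∑ t, f (x t) = ∑ i, (m i : ℝ) * f i := by
    intro x hx f
    rw [← Finset.sum_fiberwise_of_maps_to (fun t _ => Finset.mem_univ (x t)) (fun t => f (x t))]
    refine Finset.sum_congr rfl fun i _ => ?_
    rw [Finset.sum_congr rfl (fun t ht => by rw [(Finset.mem_filter.mp ht).2]),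
        Finset.sum_const, (hTmem x).mp hx i, nsmul_eq_mul]
  have hx_prod : ∀ x ∈ T, ∀ f : Fin q → ℝ, ∏ t, f (x t) = ∏ i, f i ^ m i := by
    intro x hx f
    rw [← Finset.prod_fiberwise_of_maps_to (fun t _ => Finset.mem_univ (x t)) (fun t => f (x t))]
    refine Finset.prod_congr rfl fun i _ => ?_
    rw [Finset.prod_congr rfl (fun t ht => by rw [(Finset.mem_filter.mp ht).2]),
        Finset.prod_const, (hTmem x).mp hx i]
  -- T is nonempty
  have hTne : T.Nonempty := by
    have hcard : Fintype.card (Σ i, Fin (m i)) = Fintype.card (Fin n) := by simp [hm]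
    let e : (Σ i, Fin (m i)) ≃ Fin n := Fintype.equivOfCardEq hcard
    refine ⟨fun t => (e.symm t).1, (hTmem _).mpr fun i => ?_⟩
    have e2 : {s : Σ j, Fin (m j) // s.1 = i} ≃ Fin (m i) := by
      refine ⟨fun s => Fin.cast (congrArg m s.2) s.1.2, fun v => ⟨⟨i, v⟩, rfl⟩, ?_, fun v => rfl⟩
      rintro ⟨⟨j, v⟩, h⟩
      dsimp at h; subst h; rfl
    rw [← Fintype.card_subtype,
      Fintype.card_congr ((Equiv.subtypeEquiv e.symm fun t => Iff.rfl).trans e2),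
      Fintype.card_fin]
  have hTcard : (0:ℝ) < T.card := by exact_mod_cast Finset.card_pos.mpr hTne
  -- the constant probability of a fixed-type sequence
  set c : ℝ := ∏ i, P i ^ m i with hc_def
  have hc : 0 < c := by
    refine Finset.prod_pos fun i _ => ?_
    rcases Nat.eq_zero_or_pos (m i) with h | h
    · simp [h]
    · exact pow_pos (div_pos (by exact_mod_cast h) hnR) _
  have hPAeq : PA = T.card * c := by
    show (∑ x ∈ T, ∏ t, P (x t)) = _
    rw [Finset.sum_congr rfl fun x hx => hx_prod x hx P, Finset.sum_const, nsmul_eq_mul]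
  have hPApos : 0 < PA := hPAeq ▸ mul_pos hTcard hc
  have hPout : ∀ y, Pout y = (T.card : ℝ)⁻¹ * ∑ x ∈ T, ∏ t, W (x t) (y t) := fun y => rfl
  have hS0 : ∀ y : Fin n → Fin k, 0 ≤ ∑ x ∈ T, ∏ t, W (x t) (y t) :=
    fun y => Finset.sum_nonneg fun x _ => Finset.prod_nonneg fun t _ => hW0 _ _
  have hPout0 : ∀ y, 0 ≤ Pout y := fun y => mul_nonneg (inv_nonneg.mpr hTcard.le) (hS0 y)
  -- sum over functions = product of sums
  have hswap : ∀ {α : Type} [Fintype α] (g : Fin n → α → ℝ),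
      (∑ f : Fin n → α, ∏ s, g s (f s)) = ∏ s, ∑ v, g s v := by
    intro α _ g
    rw [Finset.prod_univ_sum, Fintype.piFinset_univ]
  have hPYprod : ∀ y : Fin n → Fin k,
      (∏ t, PY (y t)) = ∑ x : Fin n → Fin q, ∏ t, P (x t) * W (x t) (y t) :=
    fun y => (hswap fun s v => P v * W v (y s)).symm
  have hnum : ∀ y : Fin n → Fin k,
      (∑ x ∈ T, ∏ t, P (x t) * W (x t) (y t)) = c * ∑ x ∈ T, ∏ t, W (x t) (y t) := by
    intro y
    rw [Finset.mul_sum]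
    refine Finset.sum_congr rfl fun x hx => ?_
    rw [Finset.prod_mul_distrib, hx_prod x hx P]
  have hPAgiven : ∀ y, PAgiven y
      = (c * ∑ x ∈ T, ∏ t, W (x t) (y t)) / ∏ t, PY (y t) := by
    intro y
    show (∑ x ∈ T, ∏ t, P (x t) * W (x t) (y t)) /
        (∑ x : Fin n → Fin q, ∏ t, P (x t) * W (x t) (y t)) = _
    rw [hnum y, ← hPYprod y]
  -- the pointwise log decomposition
  have key : ∀ y : Fin n → Fin k, Pout y * Real.log (Pout y / ∏ t, Q (y t))
      = Pout y * (∑ t, Real.log (PY (y t) / Q (y t))) + Pout y * Real.log (PAgiven y / PA) := by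
    intro y
    rcases (hPout0 y).eq_or_lt with h0 | hpos
    · rw [← h0]; simp
    · have hSpos : 0 < ∑ x ∈ T, ∏ t, W (x t) (y t) := by
        rcases (hS0 y).eq_or_lt with h | h
        · rw [hPout y, ← h, mul_zero] at hpos; exact absurd hpos (lt_irrefl 0)
        · exact h
      obtain ⟨x, hxT, hxpos⟩ : ∃ x ∈ T, 0 < ∏ t, W (x t) (y t) := by
        by_contra h
        push_neg at h
        have : ∑ x ∈ T, ∏ t, W (x t) (y t) = 0 :=
          le_antisymm (Finset.sum_nonpos fun x hx => h x hx) (hS0 y)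
        exact absurd this hSpos.ne'
      have hWt : ∀ t, 0 < W (x t) (y t) := by
        intro t
        rcases (hW0 (x t) (y t)).eq_or_lt with h | h
        · exact absurd (Finset.prod_eq_zero (Finset.mem_univ t) h.symm) hxpos.ne'
        · exact h
      have hPxt : ∀ t, 0 < P (x t) := by
        intro t
        have hmt : 0 < m (x t) := by
          rw [← (hTmem x).mp hxT (x t)]
          exact Finset.card_pos.mpr ⟨t, Finset.mem_filter.mpr ⟨Finset.mem_univ t, rfl⟩⟩
        exact div_pos (by exact_mod_cast hmt) hnR
      have hPYt : ∀ t, 0 < PY (y t) := by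
        intro t
        show 0 < ∑ i, P i * W i (y t)
        exact Finset.sum_pos' (fun i _ => mul_nonneg (hP0 i) (hW0 i (y t)))
          ⟨x t, Finset.mem_univ _, mul_pos (hPxt t) (hWt t)⟩
      have hprodPY : 0 < ∏ t, PY (y t) := Finset.prod_pos fun t _ => hPYt t
      have hprodQ : 0 < ∏ t, Q (y t) := Finset.prod_pos fun t _ => hQ0 (y t)
      have hratio : PAgiven y / PA = Pout y / ∏ t, PY (y t) := by
        rw [hPAgiven y, hPAeq, hPout y]
        have h1 := hc.ne'
        have h2 := hprodPY.ne'
        have h3 : (T.card:ℝ) ≠ 0 := hTcard.ne'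
        field_simp
      rw [hratio]
      have hlog1 : Real.log (Pout y / ∏ t, Q (y t))
          = Real.log (Pout y) - Real.log (∏ t, Q (y t)) := Real.log_div hpos.ne' hprodQ.ne'
      have hlog2 : Real.log (Pout y / ∏ t, PY (y t))
          = Real.log (Pout y) - Real.log (∏ t, PY (y t)) := Real.log_div hpos.ne' hprodPY.ne'
      have hlog3 : (∑ t, Real.log (PY (y t) / Q (y t)))
          = Real.log (∏ t, PY (y t)) - Real.log (∏ t, Q (y t)) := by
        rw [Real.log_prod fun t _ => (hPYt t).ne', Real.log_prod fun t _ => (hQ0 (y t)).ne',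
          ← Finset.sum_sub_distrib]
        exact Finset.sum_congr rfl fun t _ => Real.log_div (hPYt t).ne' (hQ0 (y t)).ne'
      rw [hlog1, hlog2, hlog3]; ring
  -- the marginalization identity
  have hmarg : (∑ y : Fin n → Fin k, Pout y * ∑ t, Real.log (PY (y t) / Q (y t)))
      = n * ∑ j, PY j * Real.log (PY j / Q j) := by
    set L : Fin k → ℝ := fun j => Real.log (PY j / Q j) with hL
    have inner : ∀ (x : Fin n → Fin q) (t : Fin n),
        (∑ y : Fin n → Fin k, (∏ s, W (x s) (y s)) * L (y t)) = ∑ j, W (x t) j * L j := by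
      intro x t
      have h1 : ∀ y : Fin n → Fin k, (∏ s, W (x s) (y s)) * L (y t)
          = ∏ s, (W (x s) (y s) * if s = t then L (y s) else 1) := by
        intro y
        rw [Finset.prod_mul_distrib, Finset.prod_ite_eq' Finset.univ t (fun s => L (y s))]
        simp
      rw [Finset.sum_congr rfl fun y _ => h1 y,
        hswap (fun s v => W (x s) v * if s = t then L v else 1)]
      have h2 : ∀ s : Fin n, (∑ v, (W (x s) v * if s = t then L v else 1))
          = if s = t then ∑ v, W (x s) v * L v else 1 := by
        intro s
        by_cases h : s = t
        · simp [h]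
        · simp [h, hW1]
      rw [Finset.prod_congr rfl fun s _ => h2 s,
        Finset.prod_ite_eq' Finset.univ t (fun s => ∑ v, W (x s) v * L v)]
      simp
    have perx : ∀ x ∈ T, (∑ y : Fin n → Fin k, (∏ s, W (x s) (y s)) * ∑ t, L (y t))
        = ∑ i, (m i : ℝ) * ∑ j, W i j * L j := by
      intro x hx
      calc (∑ y : Fin n → Fin k, (∏ s, W (x s) (y s)) * ∑ t, L (y t))
          = ∑ y : Fin n → Fin k, ∑ t, (∏ s, W (x s) (y s)) * L (y t) :=
            Finset.sum_congr rfl fun y _ => Finset.mul_sum _ _ _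
        _ = ∑ t, ∑ y : Fin n → Fin k, (∏ s, W (x s) (y s)) * L (y t) := Finset.sum_comm
        _ = ∑ t, ∑ j, W (x t) j * L j := Finset.sum_congr rfl fun t _ => inner x t
        _ = ∑ i, (m i : ℝ) * ∑ j, W i j * L j := hx_sum x hx (fun i => ∑ j, W i j * L j)
    have hconst : (∑ i, (m i : ℝ) * ∑ j, W i j * L j) = n * ∑ j, PY j * L j := by
      calc (∑ i, (m i : ℝ) * ∑ j, W i j * L j)
          = ∑ i, ∑ j, (m i : ℝ) * (W i j * L j) :=
            Finset.sum_congr rfl fun i _ => Finset.mul_sum _ _ _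
        _ = ∑ j, ∑ i, (m i : ℝ) * (W i j * L j) := Finset.sum_comm
        _ = ∑ j, (n : ℝ) * (PY j * L j) := by
            refine Finset.sum_congr rfl fun j _ => ?_
            show _ = (n : ℝ) * ((∑ i, P i * W i j) * L j)
            rw [Finset.sum_mul, Finset.mul_sum]
            refine Finset.sum_congr rfl fun i _ => ?_
            show (m i : ℝ) * (W i j * L j) = (n : ℝ) * ((m i : ℝ) / n * W i j * L j)
            field_simp
        _ = (n : ℝ) * ∑ j, PY j * L j := (Finset.mul_sum _ _ _).symm
    calc (∑ y : Fin n → Fin k, Pout y * ∑ t, L (y t))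
        = (T.card : ℝ)⁻¹ * ∑ y : Fin n → Fin k,
            ∑ x ∈ T, (∏ s, W (x s) (y s)) * ∑ t, L (y t) := by
          rw [Finset.mul_sum]
          refine Finset.sum_congr rfl fun y _ => ?_
          rw [hPout y, ← Finset.sum_mul, mul_assoc, Finset.sum_mul]
      _ = (T.card : ℝ)⁻¹ * ∑ x ∈ T, ∑ y : Fin n → Fin k,
            (∏ s, W (x s) (y s)) * ∑ t, L (y t) := by rw [Finset.sum_comm]
      _ = (T.card : ℝ)⁻¹ * ∑ x ∈ T, ∑ i, (m i : ℝ) * ∑ j, W i j * L j := by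
          rw [Finset.sum_congr rfl perx]
      _ = (T.card : ℝ)⁻¹ * (T.card * ∑ i, (m i : ℝ) * ∑ j, W i j * L j) := by
          rw [Finset.sum_const, nsmul_eq_mul]
      _ = ∑ i, (m i : ℝ) * ∑ j, W i j * L j := by
          rw [← mul_assoc, inv_mul_cancel₀ hTcard.ne', one_mul]
      _ = n * ∑ j, PY j * L j := hconst
  calc (∑ y : Fin n → Fin k, Pout y * Real.log (Pout y / ∏ t, Q (y t)))
      = ∑ y : Fin n → Fin k, (Pout y * (∑ t, Real.log (PY (y t) / Q (y t)))
          + Pout y * Real.log (PAgiven y / PA)) := Finset.sum_congr rfl fun y _ => key y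
    _ = (∑ y : Fin n → Fin k, Pout y * ∑ t, Real.log (PY (y t) / Q (y t)))
          + ∑ y : Fin n → Fin k, Pout y * Real.log (PAgiven y / PA) := Finset.sum_add_distrib
    _ = n * (∑ j, PY j * Real.log (PY j / Q j))
          + ∑ y : Fin n → Fin k, Pout y * Real.log (PAgiven y / PA) := by rw [hmarg]
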